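/- The matrix function L(z) built from the explicit rank-one matrices L₁, L₂ has spectral coordinates (q, p) and type (z₁, z₂; ζ₁, ζ₂; ρ₁, ρ₂; k₁, k₂); precisely: (a) L(q)₁₂ = 0; (b) (q − z₁)·L(q)₁₁ = p·(q − ζ₂); (c) (L₀⁻¹·(L₁ + L₂))₁₁ = k₁ and (L₀⁻¹·(L₁ + L₂))₂₂ = k₂; and (d) for all z ∉ {z₁, z₂}, det(L(z))·(z−z₁)·(z−z₂) = ρ₁·ρ₂·(z−ζ₁)·(z−ζ₂). -/

import Mathlib

open Matrix

lemma colrow_expand (u v : ℂ) :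
    (!![(1 : ℂ); u] * !![v, 1]) = !![v, 1; u * v, u] := by
  ext i j
  fin_cases i <;> fin_cases j <;>
    simp [Matrix.mul_apply, Fin.sum_univ_one]

set_option maxHeartbeats 1000000 in
/-- The explicit `2×2` matrix `L(z)` built from the rank-one matrices `L₁, L₂`
has spectral coordinates `(q, p)` and type `(z₁, z₂; ζ₁, ζ₂; ρ₁, ρ₂; k₁, k₂)`. -/
theorem additive_representation_spectral_coordinates
    (z₁ z₂ ζ₁ ζ₂ ρ₁ ρ₂ k₁ k₂ p q : ℂ)
    (hz : z₁ ≠ z₂) (hρ₁ : ρ₁ ≠ 0) (hρ₂ : ρ₂ ≠ 0) (hp : p ≠ 0)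
    (hq₁ : q ≠ z₁) (hq₂ : q ≠ z₂)
    (hk : k₁ + k₂ = (z₁ - ζ₁) + (z₂ - ζ₂))
    (L₀ L₁ L₂ : Matrix (Fin 2) (Fin 2) ℂ)
    (hL₀ : L₀ = !![ρ₁, 0; 0, ρ₂])
    (hL₁ : L₁ = ((q - z₁) / (z₂ - z₁)) •
      (!![(1 : ℂ); ρ₂ * (q - z₂ + k₂) - ρ₁ * ρ₂ * (q - ζ₁) / p] *
       !![ρ₁ * (q - z₂ + k₁) - p * (q - z₂) * (q - ζ₂) / (q - z₁), 1]))
    (hL₂ : L₂ = ((q - z₂) / (z₁ - z₂)) •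
      (!![(1 : ℂ); ρ₂ * (q - z₁ + k₂) - ρ₁ * ρ₂ * (q - z₁) * (q - ζ₁) / (p * (q - z₂))] *
       !![ρ₁ * (q - z₁ + k₁) - p * (q - ζ₂), 1]))
    (L : ℂ → Matrix (Fin 2) (Fin 2) ℂ)
    (hL : ∀ z, L z = L₀ + (z - z₁)⁻¹ • L₁ + (z - z₂)⁻¹ • L₂) :
    (L q) 0 1 = 0 ∧
    (q - z₁) * (L q) 0 0 = p * (q - ζ₂) ∧
    ((L₀⁻¹ * (L₁ + L₂)) 0 0 = k₁ ∧ (L₀⁻¹ * (L₁ + L₂)) 1 1 = k₂) ∧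
    (∀ z : ℂ, z ≠ z₁ → z ≠ z₂ →
      (L z).det * (z - z₁) * (z - z₂) = ρ₁ * ρ₂ * (z - ζ₁) * (z - ζ₂)) := by
  have hz' : z₂ - z₁ ≠ 0 := sub_ne_zero.mpr hz.symm
  have hz'' : z₁ - z₂ ≠ 0 := sub_ne_zero.mpr hz
  have hq₁' : q - z₁ ≠ 0 := sub_ne_zero.mpr hq₁
  have hq₂' : q - z₂ ≠ 0 := sub_ne_zero.mpr hq₂
  have hk2 : k₂ = (z₁ - ζ₁) + (z₂ - ζ₂) - k₁ := by linear_combination hk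
  rw [colrow_expand] at hL₁ hL₂
  set u₁ : ℂ := ρ₂ * (q - z₂ + k₂) - ρ₁ * ρ₂ * (q - ζ₁) / p with hu₁
  set v₁ : ℂ := ρ₁ * (q - z₂ + k₁) - p * (q - z₂) * (q - ζ₂) / (q - z₁) with hv₁
  set u₂ : ℂ := ρ₂ * (q - z₁ + k₂) - ρ₁ * ρ₂ * (q - z₁) * (q - ζ₁) / (p * (q - z₂)) with hu₂
  set v₂ : ℂ := ρ₁ * (q - z₁ + k₁) - p * (q - ζ₂) with hv₂
  -- single-fraction forms
  have hu₁' : u₁ = (ρ₂ * (q - z₂ + k₂) * p - ρ₁ * ρ₂ * (q - ζ₁)) / p := by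
    rw [hu₁]; field_simp
  have hv₁' : v₁ = (ρ₁ * (q - z₂ + k₁) * (q - z₁) - p * (q - z₂) * (q - ζ₂)) / (q - z₁) := by
    rw [hv₁]; field_simp
  have hu₂' : u₂ = (ρ₂ * (q - z₁ + k₂) * (p * (q - z₂)) - ρ₁ * ρ₂ * (q - z₁) * (q - ζ₁)) / (p * (q - z₂)) := by
    rw [hu₂]; field_simp
  have hinv : L₀⁻¹ = !![ρ₁⁻¹, 0; 0, ρ₂⁻¹] := by
    rw [hL₀, Matrix.inv_def, Matrix.adjugate_fin_two, Matrix.det_fin_two_of]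
    ext i j
    fin_cases i <;> fin_cases j <;>
      · simp [Matrix.smul_apply]
        try field_simp
        try ring
  -- entry formulas for L z
  have hent : ∀ z : ℂ,
      ((L z) 0 0 = ρ₁ + (z - z₁)⁻¹ * ((q - z₁) / (z₂ - z₁)) * v₁
          + (z - z₂)⁻¹ * ((q - z₂) / (z₁ - z₂)) * v₂)
      ∧ ((L z) 0 1 = (z - z₁)⁻¹ * ((q - z₁) / (z₂ - z₁))
          + (z - z₂)⁻¹ * ((q - z₂) / (z₁ - z₂)))
      ∧ ((L z) 1 0 = (z - z₁)⁻¹ * ((q - z₁) / (z₂ - z₁)) * (u₁ * v₁)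
          + (z - z₂)⁻¹ * ((q - z₂) / (z₁ - z₂)) * (u₂ * v₂))
      ∧ ((L z) 1 1 = ρ₂ + (z - z₁)⁻¹ * ((q - z₁) / (z₂ - z₁)) * u₁
          + (z - z₂)⁻¹ * ((q - z₂) / (z₁ - z₂)) * u₂) := by
    intro z
    rw [hL z, hL₀, hL₁, hL₂]
    refine ⟨?_, ?_, ?_, ?_⟩ <;>
      · simp [Matrix.add_apply, Matrix.smul_apply]
        try ring
  refine ⟨?_, ?_, ⟨?_, ?_⟩, ?_⟩
  · rw [(hent q).2.1]
    field_simp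
    ring
  · rw [(hent q).1, hv₁', hv₂]
    field_simp
    ring
  · have h00 : (L₀⁻¹ * (L₁ + L₂)) 0 0
        = ρ₁⁻¹ * (((q - z₁) / (z₂ - z₁)) * v₁ + ((q - z₂) / (z₁ - z₂)) * v₂) := by
      rw [hinv, hL₁, hL₂]
      simp [Matrix.mul_apply, Fin.sum_univ_two, Matrix.add_apply, Matrix.smul_apply]
      try ring
    rw [h00, hv₁', hv₂]
    field_simp
    ring
  · have h11 : (L₀⁻¹ * (L₁ + L₂)) 1 1
        = ρ₂⁻¹ * (((q - z₁) / (z₂ - z₁)) * u₁ + ((q - z₂) / (z₁ - z₂)) * u₂) := by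
      rw [hinv, hL₁, hL₂]
      simp [Matrix.mul_apply, Fin.sum_univ_two, Matrix.add_apply, Matrix.smul_apply]
      try ring
    rw [h11, hu₁', hu₂', hk2]
    rw [inv_mul_eq_div, div_eq_iff hρ₂, div_mul_div_comm, div_mul_div_comm,
      div_add_div _ _ (mul_ne_zero hz' hp) (mul_ne_zero hz'' (mul_ne_zero hp hq₂')),
      div_eq_iff (mul_ne_zero (mul_ne_zero hz' hp) (mul_ne_zero hz'' (mul_ne_zero hp hq₂')))]
    ring
  · intro z hz1 hz2
    have hz1' : z - z₁ ≠ 0 := sub_ne_zero.mpr hz1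
    have hz2' : z - z₂ ≠ 0 := sub_ne_zero.mpr hz2
    -- cleared-denominator forms of the four entries
    set A₁ : ℂ := ρ₁ * (q - z₂ + k₁) * (q - z₁) - p * (q - z₂) * (q - ζ₂) with hA₁
    set B₁ : ℂ := ρ₂ * (q - z₂ + k₂) * p - ρ₁ * ρ₂ * (q - ζ₁) with hB₁
    set B₂ : ℂ := ρ₂ * (q - z₁ + k₂) * (p * (q - z₂)) - ρ₁ * ρ₂ * (q - z₁) * (q - ζ₁) with hB₂
    have he00 : (L z) 0 0 * ((z - z₁) * (z - z₂) * (z₂ - z₁))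
        = ρ₁ * (z - z₁) * (z - z₂) * (z₂ - z₁) + A₁ * (z - z₂) - v₂ * (q - z₂) * (z - z₁) := by
      rw [(hent z).1, hv₁', hA₁]
      field_simp
      ring
    have he01 : (L z) 0 1 * ((z - z₁) * (z - z₂) * (z₂ - z₁))
        = (q - z₁) * (z - z₂) - (q - z₂) * (z - z₁) := by
      rw [(hent z).2.1]
      field_simp
      ring
    have he10 : (L z) 1 0 * ((z - z₁) * (z - z₂) * (z₂ - z₁) * p)
        = B₁ * A₁ * (z - z₂) - B₂ * v₂ * (z - z₁) := by
      rw [(hent z).2.2.1, hu₁', hv₁', hu₂', hA₁, hB₁, hB₂]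
      field_simp
      ring
    have he11 : (L z) 1 1 * ((z - z₁) * (z - z₂) * (z₂ - z₁) * p)
        = ρ₂ * (z - z₁) * (z - z₂) * (z₂ - z₁) * p + B₁ * (q - z₁) * (z - z₂) - B₂ * (z - z₁) := by
      rw [(hent z).2.2.2, hu₁', hu₂', hB₁, hB₂]
      field_simp
      ring
    have hK : ((z - z₁) * (z - z₂) * (z₂ - z₁) ^ 2 * p) ≠ 0 := by
      exact mul_ne_zero (mul_ne_zero (mul_ne_zero hz1' hz2') (pow_ne_zero 2 hz')) hp
    apply mul_right_cancel₀ hK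
    rw [Matrix.det_fin_two]
    simp only [hA₁, hB₁, hB₂, hv₂, hk2] at he00 he01 he10 he11 ⊢
    linear_combination
      ((L z) 1 1 * ((z - z₁) * (z - z₂) * (z₂ - z₁) * p)) * he00
      + (ρ₁ * (z - z₁) * (z - z₂) * (z₂ - z₁)
          + (ρ₁ * (q - z₂ + k₁) * (q - z₁) - p * (q - z₂) * (q - ζ₂)) * (z - z₂)
          - (ρ₁ * (q - z₁ + k₁) - p * (q - ζ₂)) * (q - z₂) * (z - z₁)) * he11
      - ((L z) 1 0 * ((z - z₁) * (z - z₂) * (z₂ - z₁) * p)) * he01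
      - ((q - z₁) * (z - z₂) - (q - z₂) * (z - z₁)) * he10
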